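/- Let L0 and L1 be relational languages and, for each t < 2, let K_t be a class of finite L_t-structures closed under isomorphism. If K0 has the joint embedding property, K0 is indivisible, and K1 is indivisible, then the lexicographic product K0 ≀ K1 is indivisible. -/
import Mathlib


/- Definitions following "Products of Classes of Finite Structures"
   (Guingona, Parnes, Scow). -/

open CategoryTheory FirstOrder FirstOrder.Language FirstOrder.Language.Structure

universe u v w w' u0 v0 u1 v1

namespace ProductsPaper

instance graphIsRelational : Language.graph.IsRelational :=
  fun _ => inferInstanceAs (IsEmpty Empty)

/-- The induced structure on a subset, for a relational language. -/
instance setStructure (L : FirstOrder.Language.{u, v}) [L.IsRelational] {M : Type w}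
    [L.Structure M] (s : Set M) : L.Structure s where
  funMap f _ := isEmptyElim f
  RelMap R x := RelMap R fun i => (x i : M)

/-- A class of structures: a set of bundled structures (with universes in `Type 0`). -/
abbrev StructClass (L : FirstOrder.Language.{u, v}) := Set (Bundled.{0} L.Structure)

variable {L : FirstOrder.Language.{u, v}}

/-- Every member of the class is finite. -/
def AllFinite (K : StructClass L) : Prop := ∀ A ∈ K, Finite A

/-- The class is closed under isomorphism. -/
def IsoClosed (K : StructClass L) : Prop :=
  ∀ A ∈ K, ∀ B : Bundled.{0} L.Structure, Nonempty (A ≃[L] B) → B ∈ K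

/-- The class `K` is indivisible: for every `A ∈ K` and `k ≥ 2` there is `B ∈ K` such that
every `k`-coloring of `B` admits a monochromatic embedded copy of `A`. -/
def Indivisible (K : StructClass L) : Prop :=
  ∀ A ∈ K, ∀ k : ℕ, 2 ≤ k → ∃ B ∈ K, ∀ c : B → Fin k,
    ∃ f : A ↪[L] B, ∃ i : Fin k, ∀ a : A, c (f a) = i

/-- The joint embedding property. -/
def JEP (K : StructClass L) : Prop :=
  ∀ A ∈ K, ∀ B ∈ K, ∃ C ∈ K, Nonempty (A ↪[L] C) ∧ Nonempty (B ↪[L] C)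

/-- The amalgamation property. -/
def AP (K : StructClass L) : Prop :=
  ∀ (A B₀ B₁ : Bundled.{0} L.Structure), A ∈ K → B₀ ∈ K → B₁ ∈ K →
    ∀ (f₀ : A ↪[L] B₀) (f₁ : A ↪[L] B₁),
      ∃ C ∈ K, ∃ (g₀ : B₀ ↪[L] C) (g₁ : B₁ ↪[L] C), g₀.comp f₀ = g₁.comp f₁

/-- The strong (disjoint) amalgamation property. -/
def SAP (K : StructClass L) : Prop :=
  ∀ (A B₀ B₁ : Bundled.{0} L.Structure), A ∈ K → B₀ ∈ K → B₁ ∈ K →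
    ∀ (f₀ : A ↪[L] B₀) (f₁ : A ↪[L] B₁),
      ∃ C ∈ K, ∃ (g₀ : B₀ ↪[L] C) (g₁ : B₁ ↪[L] C), g₀.comp f₀ = g₁.comp f₁ ∧
        Set.range g₀ ∩ Set.range g₁ = Set.range (g₀.comp f₀)

/-- The hereditary property: every substructure (equivalently, subset, since the language is
relational) of a member of the class is a member of the class. -/
def HereditaryC [L.IsRelational] (K : StructClass L) : Prop :=
  ∀ A ∈ K, ∀ s : Set A, (⟨s, setStructure L s⟩ : Bundled.{0} L.Structure) ∈ K

/-- The age of a structure: the class of all finite structures embeddable in it. -/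
def ageC (L : FirstOrder.Language.{u, v}) (M : Type w) [L.Structure M] : StructClass L :=
  {A | Finite A ∧ Nonempty (A ↪[L] M)}

/-- The proper subsets of `{0, …, n-1}`, indexing a disjoint amalgamation problem. -/
abbrev ProperSub (n : ℕ) := {p : Finset (Fin n) // p ≠ Finset.univ}

lemma inter_ne_univ {n : ℕ} (p q : ProperSub n) : p.1 ∩ q.1 ≠ Finset.univ := by
  intro h
  apply p.2
  apply Finset.eq_univ_of_forall
  intro x
  have hx : x ∈ p.1 ∩ q.1 := by rw [h]; exact Finset.mem_univ x
  exact (Finset.mem_inter.mp hx).1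

/-- The intersection of two proper subsets of `Fin n`, as a proper subset. -/
def interP {n : ℕ} (p q : ProperSub n) : ProperSub n := ⟨p.1 ∩ q.1, inter_ne_univ p q⟩

/-- The disjoint `n`-amalgamation property: every disjoint amalgamation system indexed by the
proper subsets of `{0, …, n-1}` extends to a disjoint amalgamation system indexed by all
subsets of `{0, …, n-1}`, i.e., it admits a top structure `C ∈ K` together with embeddings
commuting with the given system and satisfying the disjointness condition. -/
def DisjointNAmalg (K : StructClass L) (n : ℕ) : Prop :=
  ∀ (A : ProperSub n → Bundled.{0} L.Structure)
    (f : ∀ p q : ProperSub n, p.1 ⊆ q.1 → (A p ↪[L] A q)),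
    (∀ p, A p ∈ K) →
    (∀ (p : ProperSub n) (h : p.1 ⊆ p.1), f p p h = Embedding.refl L (A p)) →
    (∀ (p q r : ProperSub n) (hpq : p.1 ⊆ q.1) (hqr : q.1 ⊆ r.1),
      f p r (hpq.trans hqr) = (f q r hqr).comp (f p q hpq)) →
    (∀ (p q r : ProperSub n) (hpr : p.1 ⊆ r.1) (hqr : q.1 ⊆ r.1),
      Set.range (f p r hpr) ∩ Set.range (f q r hqr)
        = Set.range (f (interP p q) r (Finset.inter_subset_left.trans hpr))) →
    ∃ C ∈ K, ∃ g : ∀ p : ProperSub n, A p ↪[L] C,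
      (∀ (p q : ProperSub n) (hpq : p.1 ⊆ q.1), (g q).comp (f p q hpq) = g p) ∧
      (∀ p q : ProperSub n,
        Set.range (g p) ∩ Set.range (g q) = Set.range (g (interP p q)))

section DSS

variable (L) [L.IsRelational]

/-- `qfClassSet L C0 c` is the set of elements `c'` such that the map fixing `C0`
pointwise and sending `c` to `c'` is an isomorphism from `C0 ∪ {c}` onto `C0 ∪ {c'}`. -/
def qfClassSet {C : Type w} [L.Structure C] (C0 : Set C) (c : C) : Set C :=
  {c' | c' ∉ C0 ∧ ∀ ⦃m : ℕ⦄ (R : L.Relations m) (x x' : Fin m → C),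
    (∀ i, (x i = c ∧ x' i = c') ∨ (x i ∈ C0 ∧ x' i = x i)) →
    (RelMap R x ↔ RelMap R x')}

/-- A class of structures is definably self-similar. -/
def DefinablySelfSimilar (K : StructClass L) : Prop :=
  ∀ A B C : Bundled.{0} L.Structure, A ∈ K → B ∈ K → C ∈ K →
    ∀ (f : A ↪[L] B) (C0 : Set C) (c : C), c ∉ C0 →
    ∀ g : A ↪[L] (qfClassSet L C0 c), ∃ D ∈ K, ∃ (j : C ↪[L] D)
      (h : B ↪[L] (qfClassSet L (⇑j '' C0) (j c))),
      ∀ a : A, (h (f a) : D) = j (g a : C)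

end DSS

/-- The class `K` has exactly one singleton structure up to isomorphism. -/
def UniqueSingleton (K : StructClass L) : Prop :=
  (∃ A ∈ K, Nonempty A ∧ Subsingleton A) ∧
  (∀ A B : Bundled.{0} L.Structure, A ∈ K → B ∈ K →
    Nonempty A → Subsingleton A → Nonempty B → Subsingleton B → Nonempty (A ≃[L] B))

/-- Ultrahomogeneity: every embedding of a finite substructure extends to an automorphism. -/
def Ultrahomogeneous (L : FirstOrder.Language.{u, v}) [L.IsRelational] (M : Type w)
    [L.Structure M] : Prop :=
  ∀ s : Set M, s.Finite → ∀ f : s ↪[L] M, ∃ g : M ≃[L] M, ∀ x : s, g x = f x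

/-- The class has countably many structures up to isomorphism. -/
def EssentiallyCountable (K : StructClass L) : Prop :=
  ∃ S : StructClass L, S.Countable ∧ ∀ A ∈ K, ∃ B ∈ S, Nonempty (A ≃[L] B)

/-- A Fraïssé class: nonempty, countably many members up to isomorphism, hereditary,
with the joint embedding and amalgamation properties. -/
def FraisseClass [L.IsRelational] (K : StructClass L) : Prop :=
  K.Nonempty ∧ EssentiallyCountable K ∧ HereditaryC K ∧ JEP K ∧ AP K

/-- `M` is a Fraïssé limit of the class `K`: countable, ultrahomogeneous, with age `K`. -/
def IsFraisseLimitC [L.IsRelational] (K : StructClass L) (M : Type w) [L.Structure M] : Prop :=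
  Countable M ∧ Ultrahomogeneous L M ∧ ageC L M = K

variable {L0 : FirstOrder.Language.{u0, v0}} {L1 : FirstOrder.Language.{u1, v1}}

/-- The language of the lexicographic product: the disjoint union of the two languages plus a
new binary relation symbol `E` (the unique relation symbol of `Language.graph`). -/
def lexLang (L0 : FirstOrder.Language.{u0, v0}) (L1 : FirstOrder.Language.{u1, v1}) :
    FirstOrder.Language :=
  (L0.sum L1).sum Language.graph

/-- The language of the full product: the disjoint union of the two languages plus two
new binary relation symbols `E0` and `E1`. -/
def fullLang (L0 : FirstOrder.Language.{u0, v0}) (L1 : FirstOrder.Language.{u1, v1}) :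
    FirstOrder.Language :=
  (L0.sum L1).sum (Language.graph.sum Language.graph)


instance lexLangIsRelational [L0.IsRelational] [L1.IsRelational] :
    (lexLang L0 L1).IsRelational :=
  inferInstanceAs (((L0.sum L1).sum Language.graph).IsRelational)

instance fullLangIsRelational [L0.IsRelational] [L1.IsRelational] :
    (fullLang L0 L1).IsRelational :=
  inferInstanceAs (((L0.sum L1).sum (Language.graph.sum Language.graph)).IsRelational)

section Products

variable [L0.IsRelational] [L1.IsRelational]

/-- Interpretation of `L0` on a lexicographic product. -/
def lexStr0 {B : Type w} (A : B → Type w') [∀ b, L0.Structure (A b)] :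
    L0.Structure (Σ b, A b) where
  funMap f _ := isEmptyElim f
  RelMap {n} R x := ∃ (b : B) (a : Fin n → A b), (∀ i, x i = ⟨b, a i⟩) ∧ RelMap R a

/-- Interpretation of `L1` on a lexicographic product. -/
def lexStr1 {B : Type w} [L1.Structure B] (A : B → Type w') :
    L1.Structure (Σ b, A b) where
  funMap f _ := isEmptyElim f
  RelMap R x := RelMap R fun i => (x i).1

/-- Interpretation of the extra binary relation `E` on a lexicographic product. -/
def lexStrE {B : Type w} (A : B → Type w') : Language.graph.Structure (Σ b, A b) where
  funMap f _ := isEmptyElim f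
  RelMap {n} R := match n, R with
    | _, .adj => fun x => (x 0).1 = (x 1).1

/-- The lexicographic product of the structures `A b` along `B`. -/
def lexStr {B : Type w} [L1.Structure B] (A : B → Type w') [∀ b, L0.Structure (A b)] :
    (lexLang L0 L1).Structure (Σ b, A b) :=
  @Language.sumStructure _ _ _
    (@Language.sumStructure _ _ _ (lexStr0 A) (lexStr1 A)) (lexStrE A)

/-- The lexicographic product `A ≀ B` of two structures (as a type). -/
def lexProd (L0 : FirstOrder.Language.{u0, v0}) (L1 : FirstOrder.Language.{u1, v1})
    (A : Type w) (B : Type w') : Type max w w' :=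
  Σ _ : B, A

instance lexProdStr (A : Type w) (B : Type w') [L0.Structure A] [L1.Structure B] :
    (lexLang L0 L1).Structure (lexProd L0 L1 A B) :=
  lexStr fun _ : B => A

/-- The lexicographic product of a family of bundled structures along a bundled structure. -/
def lexBundle (B : Bundled.{0} L1.Structure) (A : B → Bundled.{0} L0.Structure) :
    Bundled.{0} (lexLang L0 L1).Structure :=
  ⟨Σ b : B, A b, lexStr fun b => (A b : Type)⟩

/-- The lexicographic product of two classes of structures. -/
def lexClass (K0 : StructClass L0) (K1 : StructClass L1) : StructClass (lexLang L0 L1) :=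
  {C | ∃ B ∈ K1, ∃ A : B → Bundled.{0} L0.Structure, (∀ b, A b ∈ K0) ∧
    Nonempty (C ≃[lexLang L0 L1] lexBundle B A)}

/-- Interpretation of `L0` on a full product. -/
def fullStr0 (A : Type w) (B : Type w') [L0.Structure A] : L0.Structure (A × B) where
  funMap f _ := isEmptyElim f
  RelMap R x := RelMap R fun i => (x i).1

/-- Interpretation of `L1` on a full product. -/
def fullStr1 (A : Type w) (B : Type w') [L1.Structure B] : L1.Structure (A × B) where
  funMap f _ := isEmptyElim f
  RelMap R x := RelMap R fun i => (x i).2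

/-- Interpretation of `E0` on a full product. -/
def fullStrE0 (A : Type w) (B : Type w') : Language.graph.Structure (A × B) where
  funMap f _ := isEmptyElim f
  RelMap {n} R := match n, R with
    | _, .adj => fun x => (x 0).1 = (x 1).1

/-- Interpretation of `E1` on a full product. -/
def fullStrE1 (A : Type w) (B : Type w') : Language.graph.Structure (A × B) where
  funMap f _ := isEmptyElim f
  RelMap {n} R := match n, R with
    | _, .adj => fun x => (x 0).2 = (x 1).2

/-- The full product `A ⊠ B` of two structures, as a structure on `A × B`. -/
def fullStr (A : Type w) (B : Type w') [L0.Structure A] [L1.Structure B] :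
    (fullLang L0 L1).Structure (A × B) :=
  @Language.sumStructure _ _ _
    (@Language.sumStructure _ _ _ (fullStr0 A B) (fullStr1 A B))
    (@Language.sumStructure _ _ _ (fullStrE0 A B) (fullStrE1 A B))

/-- The full product `A ⊠ B` of two structures (as a type). -/
def fullProd (L0 : FirstOrder.Language.{u0, v0}) (L1 : FirstOrder.Language.{u1, v1})
    (A : Type w) (B : Type w') : Type max w w' :=
  A × B

instance fullProdStr (A : Type w) (B : Type w') [L0.Structure A] [L1.Structure B] :
    (fullLang L0 L1).Structure (fullProd L0 L1 A B) :=
  fullStr A B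

/-- The full product of two bundled structures. -/
def fullBundle (A : Bundled.{0} L0.Structure) (B : Bundled.{0} L1.Structure) :
    Bundled.{0} (fullLang L0 L1).Structure :=
  ⟨A × B, fullStr A B⟩

/-- The full product of two classes of structures. -/
def fullClass (K0 : StructClass L0) (K1 : StructClass L1) : StructClass (fullLang L0 L1) :=
  {C | Finite C ∧ ∃ A ∈ K0, ∃ B ∈ K1, Nonempty (C ↪[fullLang L0 L1] fullBundle A B)}

end Products

/-- The free superposition of two classes of structures: all finite structures in the disjoint
union language whose reducts to the two languages lie in the respective classes. -/
def freeClass (K0 : StructClass L0) (K1 : StructClass L1) : StructClass (L0.sum L1) :=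
  {C | Finite C ∧
    (⟨C, (LHom.sumInl (L := L0) (L' := L1)).reduct C⟩ : Bundled.{0} L0.Structure) ∈ K0 ∧
    (⟨C, (LHom.sumInr (L := L0) (L' := L1)).reduct C⟩ : Bundled.{0} L1.Structure) ∈ K1}

/-- A configuration of the class `K` into `M^n`: an interpretation of the relation symbols of
`L0` as `L`-formulas with parameters from `M`, together with maps `f_A : A → M^n` for `A ∈ K`,
such that each relation of each `A ∈ K` is defined by the corresponding formula. -/
structure Config (L0 : FirstOrder.Language.{u0, v0}) (K : StructClass L0)
    (L : FirstOrder.Language.{u, v}) (M : Type w) [L.Structure M] (n : ℕ) where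
  I : ∀ {m : ℕ}, L0.Relations m → L.Formula ((Fin m × Fin n) ⊕ M)
  f : ∀ (A : Bundled.{0} L0.Structure), A ∈ K → A → Fin n → M
  compat : ∀ (A : Bundled.{0} L0.Structure) (hA : A ∈ K) {m : ℕ} (R : L0.Relations m)
      (a : Fin m → A),
    RelMap R a ↔ (I R).Realize (Sum.elim (fun p => f A hA (a p.1) p.2) id)

/-- A configuration is injective if all the maps `f_A` are injective. -/
def Config.Injective {K : StructClass L0} {L : FirstOrder.Language.{u, v}} {M : Type w}
    [L.Structure M] {n : ℕ} (c : Config L0 K L M n) : Prop :=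
  ∀ (A : Bundled.{0} L0.Structure) (hA : A ∈ K), Function.Injective (c.f A hA)

/-- A complete theory `T` admits a `K`-configuration if some model of `T` admits a
`K`-configuration into some finite power. -/
def AdmitsConfig (K : StructClass L0) {L : FirstOrder.Language.{u, v}} (T : L.Theory) : Prop :=
  ∃ (M : Type max u v) (_ : L.Structure M), M ⊨ T ∧ ∃ n : ℕ, Nonempty (Config L0 K L M n)

/-- `T` has an infinite model. -/
def HasInfiniteModel {L : FirstOrder.Language.{u, v}} (T : L.Theory) : Prop :=
  ∃ (M : Type max u v) (_ : L.Structure M), M ⊨ T ∧ Infinite M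

/-- The binary relation of a `Language.graph`-structure. -/
def rel2 {M : Type w} [Language.graph.Structure M] (x y : M) : Prop :=
  RelMap Language.adj ![x, y]

/-- The class of all finite strict partial orders. -/
def POClass : StructClass Language.graph :=
  {A | Finite A ∧ (∀ x : A, ¬ rel2 x x) ∧ ∀ x y z : A, rel2 x y → rel2 y z → rel2 x z}

/-- The class of all finite tournaments. -/
def TournClass : StructClass Language.graph :=
  {A | Finite A ∧ (∀ x : A, ¬ rel2 x x) ∧ ∀ x y : A, x ≠ y → Xor' (rel2 x y) (rel2 y x)}

/-- The class of all finite directed graphs. -/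
def DGClass : StructClass Language.graph :=
  {A | Finite A ∧ ∀ x : A, ¬ rel2 x x}

/-- The class of all finite (simple) graphs. -/
def GClass : StructClass Language.graph :=
  {A | Finite A ∧ (∀ x : A, ¬ rel2 x x) ∧ ∀ x y : A, rel2 x y → rel2 y x}

section Stmt0Aux

lemma jep_forall_emb {L : FirstOrder.Language.{u, v}} {K : StructClass L} (hjep : JEP K)
    {ι : Type*} [Finite ι] [Nonempty ι] (A : ι → Bundled.{0} L.Structure)
    (hA : ∀ i, A i ∈ K) : ∃ C ∈ K, ∀ i, Nonempty ((A i) ↪[L] C) := by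
  classical
  have := Fintype.ofFinite ι
  suffices H : ∀ s : Finset ι, s.Nonempty → ∃ C ∈ K, ∀ i ∈ s, Nonempty ((A i) ↪[L] C) by
    obtain ⟨C, hC, h⟩ := H Finset.univ Finset.univ_nonempty
    exact ⟨C, hC, fun i => h i (Finset.mem_univ i)⟩
  intro s
  induction s using Finset.cons_induction with
  | empty => intro hs; exact absurd hs (by simp)
  | cons a s ha ih =>
    intro _
    rcases s.eq_empty_or_nonempty with rfl | hs'
    · refine ⟨A a, hA a, fun i hi => ?_⟩
      have : i = a := by simpa using hi
      subst this
      exact ⟨Embedding.refl _ _⟩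
    · obtain ⟨C, hC, hc⟩ := ih hs'
      obtain ⟨D, hD, ⟨f⟩, ⟨g⟩⟩ := hjep (A a) (hA a) C hC
      refine ⟨D, hD, fun i hi => ?_⟩
      rcases Finset.mem_cons.mp hi with rfl | hi'
      · exact ⟨f⟩
      · obtain ⟨e⟩ := hc i hi'
        exact ⟨g.comp e⟩

variable {L0 : FirstOrder.Language.{u0, v0}} {L1 : FirstOrder.Language.{u1, v1}}
variable [L0.IsRelational] [L1.IsRelational]

/-- The embedding of a lexicographic product into another one, given an embedding of the
base structures and a family of embeddings of the fibers into a fixed fiber. -/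
def lexEmbAux {B B' : Type w} [L1.Structure B] [L1.Structure B'] [Nonempty B]
    (A : B → Type w') (A' : Type w') [∀ b, L0.Structure (A b)] [L0.Structure A']
    (h : B ↪[L1] B') (g : ∀ b, A b ↪[L0] A') :
    @Embedding (lexLang L0 L1) (Σ b, A b) (Σ _ : B', A') (lexStr A) (lexStr fun _ => A') := by
  letI : (lexLang L0 L1).Structure (Σ b, A b) := lexStr A
  letI : (lexLang L0 L1).Structure (Σ _ : B', A') := lexStr fun _ => A'
  refine ⟨⟨fun p => ⟨h p.1, g p.1 p.2⟩, ?_⟩, fun f => isEmptyElim f, ?_⟩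
  · rintro ⟨b1, a1⟩ ⟨b2, a2⟩ hp
    have hb : b1 = b2 := h.injective (congrArg Sigma.fst hp)
    subst hb
    have ha : a1 = a2 := (g b1).injective (congrArg Sigma.snd hp)
    rw [ha]
  · intro n r x
    have hcast : ∀ (b1 b2 : B) (e : b1 = b2) (y : A b1), g b2 (e ▸ y) = g b1 y := by
      rintro b1 _ rfl y; rfl
    obtain (R0 | R1) | Rg := r
    · show (∃ (b'' : B') (a' : Fin n → A'),
          (∀ i, (⟨h (x i).1, g (x i).1 (x i).2⟩ : Σ _ : B', A') = ⟨b'', a' i⟩) ∧ RelMap R0 a')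
        ↔ ∃ (b : B) (a : Fin n → A b), (∀ i, x i = ⟨b, a i⟩) ∧ RelMap R0 a
      constructor
      · rintro ⟨b', a', hx, hR⟩
        have h1 : ∀ i, h (x i).1 = b' := fun i => congrArg Sigma.fst (hx i)
        have h2 : ∀ i, g (x i).1 (x i).2 = a' i := fun i => congrArg Sigma.snd (hx i)
        rcases isEmpty_or_nonempty (Fin n) with hn | hn
        · obtain ⟨b⟩ := ‹Nonempty B›
          refine ⟨b, fun i => isEmptyElim i, fun i => isEmptyElim i, ?_⟩
          refine ((g b).map_rel' R0 (fun i => isEmptyElim i)).mp ?_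
          show RelMap R0 (⇑(g b) ∘ fun i : Fin n => (isEmptyElim i : A b))
          have : (⇑(g b) ∘ fun i : Fin n => (isEmptyElim i : A b)) = a' :=
            funext fun i => isEmptyElim i
          rw [this]; exact hR
        · obtain ⟨i0⟩ := hn
          set b : B := (x i0).1 with hbdef
          have hb1 : ∀ i, (x i).1 = b := fun i => h.injective ((h1 i).trans (h1 i0).symm)
          refine ⟨b, fun i => (hb1 i) ▸ (x i).2, fun i => ?_, ?_⟩
          · exact Sigma.ext (hb1 i) (HEq.symm (eqRec_heq _ _))
          · refine ((g b).map_rel' R0 _).mp ?_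
            show RelMap R0 (⇑(g b) ∘ fun i => (hb1 i) ▸ (x i).2)
            have : (⇑(g b) ∘ fun i => (hb1 i) ▸ (x i).2) = a' :=
              funext fun i => (hcast _ _ (hb1 i) _).trans (h2 i)
            rw [this]; exact hR
      · rintro ⟨b, a, hxa, hR⟩
        refine ⟨h b, fun i => g b (a i), fun i => ?_, ?_⟩
        · rw [hxa i]
        · exact ((g b).map_rel' R0 a).mpr hR
    · exact h.map_rel' R1 (fun i => (x i).1)
    · cases Rg
      show (h (x 0).1 = h (x 1).1) ↔ ((x 0).1 = (x 1).1)
      exact h.injective.eq_iff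

end Stmt0Aux

/-- lexicographic products preserve indivisibility. -/
theorem stmt0 (L0 : FirstOrder.Language.{u0, v0}) (L1 : FirstOrder.Language.{u1, v1})
    [L0.IsRelational] [L1.IsRelational]
    (K0 : StructClass L0) (K1 : StructClass L1)
    (hfin0 : AllFinite K0) (hiso0 : IsoClosed K0)
    (hfin1 : AllFinite K1) (hiso1 : IsoClosed K1)
    (hjep : JEP K0) (hind0 : Indivisible K0) (hind1 : Indivisible K1) :
    Indivisible (lexClass K0 K1) := by
  intro A hA k hk
  rcases isEmpty_or_nonempty A with hAe | hAne
  · exact ⟨A, hA, fun c => ⟨Embedding.refl _ _, ⟨0, by omega⟩, fun a => isEmptyElim a⟩⟩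
  · obtain ⟨Bb, hBb, Af, hAf, ⟨e⟩⟩ := hA
    haveI hBfin : Finite ↥Bb := hfin1 Bb hBb
    have hane : Nonempty (Σ b : ↥Bb, ↥(Af b)) := ⟨e (Classical.arbitrary _)⟩
    haveI hBne : Nonempty ↥Bb := ⟨hane.some.1⟩
    obtain ⟨Astar, hAstar, hembs⟩ := jep_forall_emb hjep Af hAf
    obtain ⟨A', hA', hA'prop⟩ := hind0 Astar hAstar k hk
    obtain ⟨B', hB', hB'prop⟩ := hind1 Bb hBb k hk
    refine ⟨lexBundle B' (fun _ => A'),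
      ⟨B', hB', fun _ => A', fun _ => hA',
        ⟨FirstOrder.Language.Equiv.refl (lexLang L0 L1) ↥(lexBundle B' fun _ => A')⟩⟩, ?_⟩
    intro c
    have hfib : ∀ b' : ↥B', ∃ f : ↥Astar ↪[L0] ↥A', ∃ i : Fin k,
        ∀ a : ↥Astar, c ⟨b', f a⟩ = i := fun b' => hA'prop (fun a => c ⟨b', a⟩)
    choose fEmb iFib hFib using hfib
    obtain ⟨hB, j, hj⟩ := hB'prop iFib
    have gA : ∀ b : ↥Bb, ↥(Af b) ↪[L0] ↥Astar := fun b => Classical.choice (hembs b)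
    let F := lexEmbAux (fun b : ↥Bb => ↥(Af b)) ↥A' hB
      (fun b => (fEmb (hB b)).comp (gA b))
    refine ⟨Embedding.comp (M := ↥A) (N := ↥(lexBundle Bb Af))
      (P := ↥(lexBundle B' fun _ => A')) F e.toEmbedding, j, ?_⟩
    have key : ∀ p : (Σ b : ↥Bb, ↥(Af b)), c (F p) = j := by
      rintro ⟨b, xx⟩
      exact (hFib (hB b) (gA b xx)).trans (hj b)
    exact fun a => key (e a)

end ProductsPaper
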